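/- Fix a probability measure F on [0,1] and a function π : [0,1]×[0,1] → ℝ with π(v,h) ≤ v − h for all v, h (a tie-breaking rule), and define the tie-broken utility u^π(b,h;v) = (v−b)·1{b>h} + π(v,b)·1{b=h}. Then for every highest-competing-bid distribution H on [0,1]: sup over all bidding strategies s' of E_{(v,h)∼F×H}[ E_{b∼s'(v)}[u^π(b,h;v)] ] equals sup over all bidding strategies s' of E_{(v,h)∼F×H}[ E_{b∼s'(v)}[u(b,h;v)] ], where u(b,h;v) = (v−b)·1{b≥h}. -/

import Mathlib

open MeasureTheory ProbabilityTheory Set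

noncomputable section

namespace FPA

/-- The unit interval `[0,1] ⊆ ℝ`. -/
def Iu : Set ℝ := Set.Icc 0 1

/-- `μ` is a probability measure on `[0,1]`. -/
def IsProbOn (μ : Measure ℝ) : Prop := IsProbabilityMeasure μ ∧ μ Iu = 1

/-- A bidding strategy: a Markov kernel from `[0,1]` to `[0,1]`. -/
def IsStrategy (s : Kernel ℝ ℝ) : Prop := IsMarkovKernel s ∧ ∀ v : ℝ, s v Iu = 1

/-- The buyer's utility `u(b,h;v) = (v−b)·1{b ≥ h}`. -/
def util (b h v : ℝ) : ℝ := (v - b) * (if h ≤ b then 1 else 0)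

/-- Expected utility `U_F(s,H)`. -/
def eUtil (F : Measure ℝ) (s : Kernel ℝ ℝ) (H : Measure ℝ) : ℝ :=
  ∫ v, ∫ h, ∫ b, util b h v ∂(s v) ∂H ∂F

/-- Regret `Reg_F(s,H) = sup_{s'∈S} U_F(s',H) − U_F(s,H)`. -/
def regret (F : Measure ℝ) (s : Kernel ℝ ℝ) (H : Measure ℝ) : ℝ :=
  (⨆ s' : {k : Kernel ℝ ℝ // IsStrategy k}, eUtil F s'.1 H) - eUtil F s H

/-- Induced bid distribution `P_{s,F}`. -/
def bidDist (F : Measure ℝ) (s : Kernel ℝ ℝ) : Measure ℝ := F.bind (fun v => s v)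

/-- CDF of a measure on `[0,1]`: `F(x) = F([0,x])`. -/
def cdf01 (F : Measure ℝ) (x : ℝ) : ℝ := (F (Set.Iic x)).toReal

/-- Generalized inverse `F⁻(t) = inf {x ∈ [0,1] : F(x) ≥ t}`. -/
def qinv (F : Measure ℝ) (t : ℝ) : ℝ := sInf {x | x ∈ Iu ∧ t ≤ cdf01 F x}

/-- Full-information benchmark against a deterministic highest competing bid `h`. -/
def bench (F : Measure ℝ) (h : ℝ) : ℝ := ∫ v, (v - h) * (if h ≤ v then 1 else 0) ∂F

/-- Full-information regret `R_F(s,H)`. -/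
def fregret (F : Measure ℝ) (s : Kernel ℝ ℝ) (H : Measure ℝ) : ℝ :=
  (∫ h, bench F h ∂H) - eUtil F s H

/-- Absolute continuity of a function on `[0,1]` (FTC characterization). -/
def AbsContOn01 (f : ℝ → ℝ) : Prop :=
  ∃ g : ℝ → ℝ, IntervalIntegrable g volume 0 1 ∧
    ∀ x ∈ Iu, f x = f 0 + ∫ t in (0:ℝ)..x, g t

/-- The set of quantiles corresponding to value `v`: `Y(v) = {y ∈ [0,1] : F⁻(y) = v}`. -/
def Yset (F : Measure ℝ) (v : ℝ) : Set ℝ := {y | y ∈ Iu ∧ qinv F y = v}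

/-- Uniform distribution on a set `A ⊆ ℝ`. -/
def unifOn (A : Set ℝ) : Measure ℝ := (volume A)⁻¹ • volume.restrict A

/-- `s` is the bidding strategy corresponding to the quantile-based bidding strategy `Q`:
it bids `Q(F(v))` when `F({v}) = 0`, and the pushforward under `Q` of the uniform
distribution on `Y(v)` when `F({v}) > 0`. -/
def IsQuantileStrategy (F : Measure ℝ) (Q : ℝ → ℝ) (s : Kernel ℝ ℝ) : Prop :=
  IsStrategy s ∧ ∀ v ∈ Iu,
    s v = if F {v} = 0 then Measure.dirac (Q (cdf01 F v)) else (unifOn (Yset F v)).map Q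

/-- The candidate worst-case highest-competing-bid CDF
`H*(x) = exp(−∫_{(Q*)⁻¹(x)}^1 dt/(1−F(Q*(t))))`. -/
def Hstar (F : Measure ℝ) (Q : ℝ → ℝ) (x : ℝ) : ℝ :=
  Real.exp (-(∫ t in (Function.invFunOn Q Iu x)..(1:ℝ), 1 / (1 - cdf01 F (Q t))))


/-- Tie-broken utility `u^π(b,h;v) = (v−b)·1{b>h} + π(v,b)·1{b=h}`. -/
def utilTie (tie : ℝ → ℝ → ℝ) (b h v : ℝ) : ℝ :=
  (v - b) * (if h < b then 1 else 0) + tie v b * (if b = h then 1 else 0)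

/-- Expected utility under the tie-breaking rule `π`. -/
def eUtilTie (tie : ℝ → ℝ → ℝ) (F : Measure ℝ) (s : Kernel ℝ ℝ) (H : Measure ℝ) : ℝ :=
  ∫ v, ∫ h, ∫ b, utilTie tie b h v ∂(s v) ∂H ∂F

/-! Auxiliary lemmas -/

lemma measurableSet_Iu : MeasurableSet Iu := measurableSet_Icc

lemma ae_mem_Iu {μ : Measure ℝ} [IsProbabilityMeasure μ] (h : μ Iu = 1) :
    ∀ᵐ x ∂μ, x ∈ Iu := by
  rw [ae_iff]
  have he : {x : ℝ | ¬ x ∈ Iu} = Iuᶜ := rfl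
  rw [he, prob_compl_eq_zero_iff measurableSet_Iu]
  exact h

lemma integral_le_of_le_of_nonneg {μ : Measure ℝ} {f g : ℝ → ℝ}
    (hg : Integrable g μ) (hg0 : 0 ≤ᵐ[μ] g) (hfg : f ≤ᵐ[μ] g) :
    ∫ x, f x ∂μ ≤ ∫ x, g x ∂μ := by
  by_cases hf : Integrable f μ
  · exact integral_mono_ae hf hg hfg
  · rw [integral_undef hf]
    exact integral_nonneg_of_ae hg0

lemma integral_le_one' {μ : Measure ℝ} [IsProbabilityMeasure μ] {f : ℝ → ℝ}
    (h : ∀ᵐ x ∂μ, f x ≤ 1) : ∫ x, f x ∂μ ≤ 1 := by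
  by_cases hf : Integrable f μ
  · calc ∫ x, f x ∂μ ≤ ∫ _, (1:ℝ) ∂μ := integral_mono_ae hf (integrable_const 1) h
    _ = 1 := by simp
  · rw [integral_undef hf]; norm_num

lemma abs_integral_le_one {μ : Measure ℝ} [IsProbabilityMeasure μ] {f : ℝ → ℝ}
    (h : ∀ᵐ x ∂μ, |f x| ≤ 1) : |∫ x, f x ∂μ| ≤ 1 := by
  by_cases hf : Integrable f μ
  · have h1 : |∫ x, f x ∂μ| ≤ ∫ x, |f x| ∂μ := by
      simpa [Real.norm_eq_abs] using norm_integral_le_integral_norm (μ := μ) f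
    exact h1.trans (integral_le_one' h)
  · rw [integral_undef hf]; simp

/-! Pointwise utility facts -/

lemma utilTie_le_util {tie : ℝ → ℝ → ℝ} (htie : ∀ v h : ℝ, tie v h ≤ v - h) (b h v : ℝ) :
    utilTie tie b h v ≤ util b h v := by
  unfold utilTie util
  rcases lt_trichotomy h b with hc | hc | hc
  · rw [if_pos hc, if_neg (ne_of_gt hc), if_pos hc.le]; simp
  · rw [if_neg (by rw [hc]; exact lt_irrefl b), if_pos hc.symm, if_pos hc.le]
    have := htie v b
    subst hc
    nlinarith
  · rw [if_neg (not_lt.mpr hc.le), if_neg (ne_of_lt hc), if_neg (not_le.mpr hc)]; simp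

lemma util_le_one {v b : ℝ} (h : ℝ) (hv : v ∈ Iu) (hb0 : 0 ≤ b) : util b h v ≤ 1 := by
  unfold util; split
  · nlinarith [hv.2]
  · norm_num

lemma abs_util_le_one {v b : ℝ} (h : ℝ) (hv : v ∈ Iu) (hb : b ∈ Iu) : |util b h v| ≤ 1 := by
  unfold util
  obtain ⟨hv0, hv1⟩ := hv; obtain ⟨hb0, hb1⟩ := hb
  rw [abs_le]; split <;> constructor <;> nlinarith

lemma utilTie_of_ne {tie : ℝ → ℝ → ℝ} {b h : ℝ} (v : ℝ) (hne : b ≠ h) :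
    utilTie tie b h v = (v - b) * (if h < b then 1 else 0) := by
  unfold utilTie; rw [if_neg hne, mul_zero, add_zero]

lemma abs_utilTie_le_one {tie : ℝ → ℝ → ℝ} {b h v : ℝ} (hne : b ≠ h) (hv : v ∈ Iu) (hb : b ∈ Iu) :
    |utilTie tie b h v| ≤ 1 := by
  rw [utilTie_of_ne v hne]
  obtain ⟨hv0, hv1⟩ := hv; obtain ⟨hb0, hb1⟩ := hb
  rw [abs_le]; split <;> constructor <;> nlinarith

/-! Modification maps -/

def g2fun : ℝ × ℝ → ℝ := fun p => max 0 (min p.2 (max 0 (min p.1 1)))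

lemma measurable_g2fun : Measurable g2fun :=
  measurable_const.max ((measurable_snd).min
    (measurable_const.max ((measurable_fst).min measurable_const)))

lemma g2fun_mem (p : ℝ × ℝ) : g2fun p ∈ Iu := by
  unfold g2fun
  constructor
  · exact le_max_left _ _
  · refine max_le zero_le_one ((min_le_right _ _).trans (max_le zero_le_one (min_le_right _ _)))

def gTh (δ θ : ℝ) : ℝ × ℝ → ℝ :=
  fun p => (1 - θ) * (max 0 (min (min p.2 (max 0 (min p.1 1))) (1 - δ))) + θ

lemma measurable_gTh (δ θ : ℝ) : Measurable (gTh δ θ) := by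
  apply Measurable.add _ measurable_const
  apply Measurable.mul measurable_const
  exact measurable_const.max (((measurable_snd).min
    (measurable_const.max ((measurable_fst).min measurable_const))).min measurable_const)

lemma gTh_mem {δ θ : ℝ} (hδ0 : 0 < δ) (hδ1 : δ < 1) (hθ0 : 0 < θ) (hθδ : θ ≤ δ) (p : ℝ × ℝ) :
    gTh δ θ p ∈ Iu := by
  unfold gTh
  set m := max 0 (min (min p.2 (max 0 (min p.1 1))) (1 - δ)) with hm
  have hm0 : 0 ≤ m := le_max_left _ _
  have hm1 : m ≤ 1 - δ := max_le (by linarith) (min_le_right _ _)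
  constructor
  · nlinarith
  · nlinarith

/-! Key pointwise inequalities -/

lemma util_g2_nonneg {v : ℝ} (h : ℝ) (hv : v ∈ Iu) (b : ℝ) : 0 ≤ util (g2fun (v, b)) h v := by
  obtain ⟨hv0, hv1⟩ := hv
  have hle : g2fun (v, b) ≤ v := by
    unfold g2fun
    simp only [min_eq_left hv1, max_eq_right hv0]
    exact max_le hv0 (min_le_right _ _)
  unfold util
  apply mul_nonneg (by linarith)
  split <;> norm_num

lemma key1 {tie : ℝ → ℝ → ℝ} (htie : ∀ v h : ℝ, tie v h ≤ v - h) {v b : ℝ} (h : ℝ)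
    (hv : v ∈ Iu) (hb : b ∈ Iu) :
    utilTie tie b h v ≤ util (g2fun (v, b)) h v := by
  refine (utilTie_le_util htie b h v).trans ?_
  obtain ⟨hv0, hv1⟩ := hv; obtain ⟨hb0, hb1⟩ := hb
  have hg : g2fun (v, b) = min b v := by
    unfold g2fun
    simp only [min_eq_left hv1, max_eq_right hv0]
    exact max_eq_right (le_min hb0 hv0)
  rcases le_total b v with hbv | hbv
  · rw [hg, min_eq_left hbv]
  · have h0 : util b h v ≤ 0 := by
      unfold util
      apply mul_nonpos_of_nonpos_of_nonneg (by linarith)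
      split <;> norm_num
    refine h0.trans (util_g2_nonneg h ⟨hv0, hv1⟩ b)

lemma key2 {tie : ℝ → ℝ → ℝ} {δ θ v b h : ℝ} (hδ0 : 0 < δ) (hδ1 : δ < 1) (hθ0 : 0 < θ)
    (hθδ : θ ≤ δ) (hv : v ∈ Iu) (hb : b ∈ Iu) (hne : gTh δ θ (v, b) ≠ h) :
    util b h v - 2*δ ≤ utilTie tie (gTh δ θ (v, b)) h v := by
  obtain ⟨hv0, hv1⟩ := hv; obtain ⟨hb0, hb1⟩ := hb
  rw [utilTie_of_ne v hne]
  have hcl : max 0 (min v 1) = v := by rw [min_eq_left hv1, max_eq_right hv0]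
  have hgth : gTh δ θ (v, b) = (1-θ) * (max 0 (min (min b v) (1 - δ))) + θ := by
    unfold gTh; rw [hcl]
  set m := max 0 (min (min b v) (1 - δ)) with hm
  have hm0 : 0 ≤ m := le_max_left _ _
  have hm1 : m ≤ 1 - δ := max_le (by linarith) (min_le_right _ _)
  have hmb : m ≤ b := max_le hb0 ((min_le_left _ _).trans (min_le_left _ _))
  have hmv : m ≤ v := max_le hv0 ((min_le_left _ _).trans (min_le_right _ _))
  set g := (1-θ)*m + θ with hgdef
  rw [hgth] at hne ⊢
  have hgm : m < g := by nlinarith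
  have hgub : g ≤ m + θ := by nlinarith
  unfold util
  by_cases hhg : h < g
  · rw [if_pos hhg]
    by_cases hhb : h ≤ b
    · rw [if_pos hhb]; nlinarith
    · rw [if_neg hhb]; nlinarith
  · rw [if_neg hhg, mul_zero]
    have hgh : g < h := lt_of_le_of_ne (not_lt.mp hhg) hne
    by_cases hhb : h ≤ b
    · rw [if_pos hhb, mul_one]
      have hmltb : m < b := lt_of_lt_of_le hgm (hgh.le.trans hhb)
      rcases le_total (min b v) (1 - δ) with hc | hc
      · have hmeq : m = min b v := by rw [hm, min_eq_left hc, max_eq_right (le_min hb0 hv0)]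
        rcases le_total b v with h2 | h2
        · rw [min_eq_left h2] at hmeq; linarith
        · rw [min_eq_right h2] at hmeq; linarith
      · have hmeq : m = 1 - δ := by rw [hm, min_eq_right hc, max_eq_right (by linarith)]
        linarith
    · rw [if_neg hhb, mul_zero]; linarith

/-! Measurability -/

lemma measurable_util_aux : Measurable fun p : (ℝ × ℝ) × ℝ => util p.2 p.1.2 p.1.1 := by
  unfold util
  refine Measurable.mul (measurable_fst.fst.sub measurable_snd) ?_
  exact Measurable.ite (measurableSet_le measurable_fst.snd measurable_snd)
    measurable_const measurable_const

lemma measurable_util_b (h v : ℝ) : Measurable fun b : ℝ => util b h v :=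
  measurable_util_aux.comp (measurable_prodMk_left (x := ((v, h) : ℝ × ℝ)))

lemma measurable_utilTie_aux {tie : ℝ → ℝ → ℝ} (htiem : Measurable (Function.uncurry tie)) :
    Measurable fun p : (ℝ × ℝ) × ℝ => utilTie tie p.2 p.1.2 p.1.1 := by
  unfold utilTie
  apply Measurable.add
  · refine Measurable.mul (measurable_fst.fst.sub measurable_snd) ?_
    exact Measurable.ite (measurableSet_lt measurable_fst.snd measurable_snd)
      measurable_const measurable_const
  · refine Measurable.mul (htiem.comp (measurable_fst.fst.prodMk measurable_snd)) ?_
    exact Measurable.ite (measurableSet_eq_fun measurable_snd measurable_fst.snd)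
      measurable_const measurable_const

lemma measurable_utilTie_b {tie : ℝ → ℝ → ℝ} (htiem : Measurable (Function.uncurry tie))
    (h v : ℝ) : Measurable fun b : ℝ => utilTie tie b h v :=
  (measurable_utilTie_aux htiem).comp (measurable_prodMk_left (x := ((v, h) : ℝ × ℝ)))

/-! Modified kernels -/

def modK (s : Kernel ℝ ℝ) (g : ℝ × ℝ → ℝ) : Kernel ℝ ℝ :=
  Kernel.map ((Kernel.deterministic id measurable_id) ×ₖ s) g

lemma modK_apply (s : Kernel ℝ ℝ) [IsMarkovKernel s] {g : ℝ × ℝ → ℝ} (hg : Measurable g)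
    (v : ℝ) : modK s g v = (s v).map (fun b => g (v, b)) := by
  rw [modK, Kernel.map_apply _ hg, Kernel.prod_apply, Kernel.deterministic_apply, id_eq,
    Measure.dirac_prod, Measure.map_map hg measurable_prodMk_left]
  rfl

lemma modK_isStrategy {s : Kernel ℝ ℝ} (hs : IsStrategy s) {g : ℝ × ℝ → ℝ}
    (hg : Measurable g) (hgr : ∀ p, g p ∈ Iu) : IsStrategy (modK s g) := by
  haveI := hs.1
  haveI hmk : IsMarkovKernel (modK s g) := Kernel.IsMarkovKernel.map _ hg
  refine ⟨hmk, fun v => ?_⟩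
  have hgc : Measurable fun b => g (v, b) := hg.comp measurable_prodMk_left
  rw [modK_apply s hg v, Measure.map_apply hgc measurableSet_Iu]
  have he : (fun b => g (v, b)) ⁻¹' Iu = Set.univ :=
    eq_univ_of_forall fun b => hgr (v, b)
  rw [he]
  exact measure_univ

lemma integral_modK {s : Kernel ℝ ℝ} [IsMarkovKernel s] {g : ℝ × ℝ → ℝ} (hg : Measurable g)
    (v : ℝ) {f : ℝ → ℝ} (hf : Measurable f) :
    ∫ b', f b' ∂(modK s g v) = ∫ b, f (g (v, b)) ∂(s v) := by
  rw [modK_apply s hg v]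
  have hgc : Measurable fun b => g (v, b) := hg.comp measurable_prodMk_left
  exact integral_map hgc.aemeasurable hf.aestronglyMeasurable

lemma sm_inner {κ : Kernel ℝ ℝ} [IsSFiniteKernel κ] {f : (ℝ × ℝ) × ℝ → ℝ}
    (hf : StronglyMeasurable f) :
    StronglyMeasurable fun q : ℝ × ℝ => ∫ b, f (q, b) ∂(κ q.1) := by
  have h := hf.integral_kernel_prod_right' (κ := κ.comap Prod.fst measurable_fst)
  simpa [Kernel.comap_apply] using h

/-! Upper bound by one -/

lemma eUtil_le_one {F H : Measure ℝ} (hF : IsProbOn F) (hH : IsProbOn H)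
    {s : Kernel ℝ ℝ} (hs : IsStrategy s) : eUtil F s H ≤ 1 := by
  haveI := hF.1; haveI := hH.1; haveI := hs.1
  unfold eUtil
  apply integral_le_one'
  filter_upwards [ae_mem_Iu hF.2] with v hv
  apply integral_le_one'
  refine Filter.Eventually.of_forall fun h => ?_
  apply integral_le_one'
  filter_upwards [ae_mem_Iu (hs.2 v)] with b hb
  exact util_le_one h hv hb.1

lemma eUtilTie_le_one {F H : Measure ℝ} (hF : IsProbOn F) (hH : IsProbOn H)
    {tie : ℝ → ℝ → ℝ} (htie : ∀ v h : ℝ, tie v h ≤ v - h)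
    {s : Kernel ℝ ℝ} (hs : IsStrategy s) : eUtilTie tie F s H ≤ 1 := by
  haveI := hF.1; haveI := hH.1; haveI := hs.1
  unfold eUtilTie
  apply integral_le_one'
  filter_upwards [ae_mem_Iu hF.2] with v hv
  apply integral_le_one'
  refine Filter.Eventually.of_forall fun h => ?_
  apply integral_le_one'
  filter_upwards [ae_mem_Iu (hs.2 v)] with b hb
  exact (utilTie_le_util htie b h v).trans (util_le_one h hv hb.1)

/-! Direction 1 -/

lemma dir1 {F H : Measure ℝ} (hF : IsProbOn F) (hH : IsProbOn H)
    {tie : ℝ → ℝ → ℝ} (htie : ∀ v h : ℝ, tie v h ≤ v - h)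
    {s : Kernel ℝ ℝ} (hs : IsStrategy s) :
    eUtilTie tie F s H ≤ eUtil F (modK s g2fun) H := by
  haveI := hF.1; haveI := hH.1; haveI := hs.1
  have hstrat2 := modK_isStrategy hs measurable_g2fun g2fun_mem
  haveI := hstrat2.1
  set G : ℝ × ℝ → ℝ := fun q => ∫ b', util b' q.2 q.1 ∂(modK s g2fun q.1) with hGdef
  have hGsm : StronglyMeasurable G :=
    sm_inner (κ := modK s g2fun) measurable_util_aux.stronglyMeasurable
  have hGmap : ∀ v h, G (v, h) = ∫ b, util (g2fun (v, b)) h v ∂(s v) := fun v h =>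
    integral_modK measurable_g2fun v (measurable_util_b h v)
  have hGbound : ∀ v ∈ Iu, ∀ h : ℝ, 0 ≤ G (v, h) ∧ G (v, h) ≤ 1 := by
    intro v hv h
    rw [hGmap]
    constructor
    · exact integral_nonneg fun b => util_g2_nonneg h hv b
    · exact integral_le_one' (Filter.Eventually.of_forall fun b =>
        util_le_one h hv (g2fun_mem (v, b)).1)
  have hGv : StronglyMeasurable fun v => ∫ h, G (v, h) ∂H := hGsm.integral_prod_right'
  show (∫ v, ∫ h, ∫ b, utilTie tie b h v ∂(s v) ∂H ∂F) ≤ ∫ v, ∫ h, G (v, h) ∂H ∂F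
  apply integral_le_of_le_of_nonneg
  · refine Integrable.mono' (integrable_const 1) hGv.aestronglyMeasurable ?_
    filter_upwards [ae_mem_Iu hF.2] with v hv
    rw [Real.norm_eq_abs]
    exact abs_integral_le_one (Filter.Eventually.of_forall fun h => by
      rw [abs_le]
      exact ⟨by linarith [(hGbound v hv h).1], (hGbound v hv h).2⟩)
  · filter_upwards [ae_mem_Iu hF.2] with v hv
    exact integral_nonneg fun h => (hGbound v hv h).1
  · filter_upwards [ae_mem_Iu hF.2] with v hv
    apply integral_le_of_le_of_nonneg
    · refine Integrable.mono' (integrable_const 1)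
        (hGsm.comp_measurable measurable_prodMk_left).aestronglyMeasurable ?_
      refine Filter.Eventually.of_forall fun h => ?_
      rw [Real.norm_eq_abs, abs_le]
      exact ⟨by linarith [(hGbound v hv h).1], (hGbound v hv h).2⟩
    · exact Filter.Eventually.of_forall fun h => (hGbound v hv h).1
    · refine Filter.Eventually.of_forall fun h => ?_
      show (∫ b, utilTie tie b h v ∂(s v)) ≤ G (v, h)
      rw [hGmap]
      apply integral_le_of_le_of_nonneg
      · refine Integrable.mono' (integrable_const 1)
          ((measurable_util_aux.comp
            ((measurable_const.prodMk measurable_const).prodMk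
              (measurable_g2fun.comp (measurable_const.prodMk measurable_id)))).aestronglyMeasurable) ?_
        refine Filter.Eventually.of_forall fun b => ?_
        rw [Real.norm_eq_abs, abs_le]
        refine ⟨by linarith [util_g2_nonneg h hv b], util_le_one h hv (g2fun_mem (v, b)).1⟩
      · exact Filter.Eventually.of_forall fun b => util_g2_nonneg h hv b
      · filter_upwards [ae_mem_Iu (hs.2 v)] with b hb
        exact key1 htie h hv hb

/-! Choosing a tie-free shift -/

lemma exists_good_theta {F H : Measure ℝ} [IsProbabilityMeasure F] [IsProbabilityMeasure H]
    {s : Kernel ℝ ℝ} [IsMarkovKernel s] {δ : ℝ} (hδ0 : 0 < δ) (hδ1 : δ < 1) :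
    ∃ θ ∈ Ioo (0:ℝ) δ, ∀ᵐ v ∂F, ∀ᵐ h ∂H, (s v) {b | gTh δ θ (v, b) = h} = 0 := by
  set κ : Kernel ℝ (ℝ × ℝ) := (Kernel.const ℝ H) ×ₖ s with hκ
  set P : Measure (ℝ × ℝ × ℝ) := F.compProd κ with hP
  set D : ℝ → Set (ℝ × ℝ × ℝ) := fun θ => {p | gTh δ θ (p.1, p.2.2) = p.2.1} with hD
  have hDm : ∀ θ, MeasurableSet (D θ) := fun θ =>
    measurableSet_eq_fun ((measurable_gTh δ θ).comp (measurable_fst.prodMk measurable_snd.snd))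
      measurable_snd.fst
  have hDd : Pairwise (Function.onFun Disjoint D) := by
    intro θ1 θ2 hne
    rw [Function.onFun, Set.disjoint_left]
    intro p h1 h2
    simp only [hD, mem_setOf_eq, gTh] at h1 h2
    set m := max 0 (min (min p.2.2 (max 0 (min p.1 1))) (1 - δ)) with hm
    have hm1 : m ≤ 1 - δ := max_le (by linarith) (min_le_right _ _)
    have he : (θ1 - θ2) * (1 - m) = 0 := by linear_combination h1 - h2
    rcases mul_eq_zero.mp he with h | h
    · exact hne (by linarith)
    · linarith
  have hcount : Set.Countable {θ : ℝ | 0 < P (D θ)} :=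
    Measure.countable_meas_pos_of_disjoint_iUnion hDm hDd
  obtain ⟨θ, hθmem, hθ0⟩ : ∃ θ ∈ Ioo (0:ℝ) δ, P (D θ) = 0 := by
    by_contra hcon
    push_neg at hcon
    have hsub : Ioo (0:ℝ) δ ⊆ {θ | 0 < P (D θ)} := fun θ hθ =>
      pos_iff_ne_zero.mpr (hcon θ hθ)
    have hc2 : (Ioo (0:ℝ) δ).Countable := hcount.mono hsub
    rw [← Cardinal.le_aleph0_iff_set_countable, Cardinal.mk_Ioo_real hδ0] at hc2
    exact absurd hc2 (not_le.mpr Cardinal.aleph0_lt_continuum)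
  refine ⟨θ, hθmem, ?_⟩
  have h0 : ∫⁻ v, κ v (Prod.mk v ⁻¹' (D θ)) ∂F = 0 := by
    rw [← Measure.compProd_apply (hDm θ)]; exact hθ0
  have hmeas : Measurable fun v => κ v (Prod.mk v ⁻¹' (D θ)) :=
    Kernel.measurable_kernel_prodMk_left (hDm θ)
  have h1 := (lintegral_eq_zero_iff hmeas).mp h0
  filter_upwards [h1] with v hv
  have hv' : (H.prod (s v)) (Prod.mk v ⁻¹' (D θ)) = 0 := by
    have : κ v = H.prod (s v) := by rw [hκ, Kernel.prod_apply, Kernel.const_apply]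
    rw [← this]; exact hv
  have hsec : MeasurableSet (Prod.mk v ⁻¹' (D θ)) := measurable_prodMk_left (hDm θ)
  have h2 := (Measure.measure_prod_null hsec).mp hv'
  filter_upwards [h2] with h hh
  exact hh

/-! Direction 2 -/

lemma dir2 {F H : Measure ℝ} (hF : IsProbOn F) (hH : IsProbOn H)
    {tie : ℝ → ℝ → ℝ} (htiem : Measurable (Function.uncurry tie))
    (htie : ∀ v h : ℝ, tie v h ≤ v - h)
    {s : Kernel ℝ ℝ} (hs : IsStrategy s) {ε : ℝ} (hε : 0 < ε) :
    ∃ s' : Kernel ℝ ℝ, IsStrategy s' ∧ eUtil F s H - ε ≤ eUtilTie tie F s' H := by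
  haveI := hF.1; haveI := hH.1; haveI := hs.1
  set δ : ℝ := min (ε/2) (1/2) with hδdef
  have hδ0 : 0 < δ := lt_min (by linarith) (by norm_num)
  have hδ1 : δ < 1 := (min_le_right _ _).trans_lt (by norm_num)
  have hδε : 2*δ ≤ ε := by
    have h1 := min_le_left (ε/2) (1/2); linarith
  obtain ⟨θ, hθmem, hae⟩ := exists_good_theta (F := F) (H := H) (s := s) hδ0 hδ1
  obtain ⟨hθ0, hθδ⟩ := hθmem
  set g : ℝ × ℝ → ℝ := gTh δ θ with hgdef
  have hgm : Measurable g := measurable_gTh δ θ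
  have hgmem : ∀ p, g p ∈ Iu := gTh_mem hδ0 hδ1 hθ0 hθδ.le
  have hstrat' := modK_isStrategy hs hgm hgmem
  haveI := hstrat'.1
  refine ⟨modK s g, hstrat', ?_⟩
  set A : ℝ × ℝ → ℝ := fun q => ∫ b', utilTie tie b' q.2 q.1 ∂(modK s g q.1) with hA
  set B : ℝ × ℝ → ℝ := fun q => ∫ b, util b q.2 q.1 ∂(s q.1) with hB
  have hAsm : StronglyMeasurable A :=
    sm_inner (κ := modK s g) (measurable_utilTie_aux htiem).stronglyMeasurable
  have hBsm : StronglyMeasurable B := sm_inner (κ := s) measurable_util_aux.stronglyMeasurable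
  have hBb : ∀ v ∈ Iu, ∀ h : ℝ, |B (v, h)| ≤ 1 := by
    intro v hv h
    apply abs_integral_le_one
    filter_upwards [ae_mem_Iu (hs.2 v)] with b hb
    exact abs_util_le_one h hv hb
  have key : ∀ v ∈ Iu, (∀ᵐ h ∂H, s v {b | g (v, b) = h} = 0) →
      (∀ᵐ h ∂H, |A (v, h)| ≤ 1 ∧ B (v, h) - 2*δ ≤ A (v, h)) := by
    intro v hv hvae
    filter_upwards [ae_mem_Iu hH.2, hvae] with h hh hsv
    have hnotie : ∀ᵐ b ∂(s v), g (v, b) ≠ h := by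
      rw [ae_iff]
      convert hsv using 2
      ext b; simp [not_not]
    have hAeq : A (v, h) = ∫ b, utilTie tie (g (v, b)) h v ∂(s v) :=
      integral_modK hgm v (measurable_utilTie_b htiem h v)
    have hmc : Measurable fun b => utilTie tie (g (v, b)) h v :=
      (measurable_utilTie_b htiem h v).comp (hgm.comp measurable_prodMk_left)
    have hintg : Integrable (fun b => utilTie tie (g (v, b)) h v) (s v) := by
      refine Integrable.mono' (integrable_const 1) hmc.aestronglyMeasurable ?_
      filter_upwards [hnotie] with b hb
      rw [Real.norm_eq_abs]
      exact abs_utilTie_le_one hb hv (hgmem (v, b))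
    have hintu : Integrable (fun b => util b h v) (s v) := by
      refine Integrable.mono' (integrable_const 1) (measurable_util_b h v).aestronglyMeasurable ?_
      filter_upwards [ae_mem_Iu (hs.2 v)] with b hb
      rw [Real.norm_eq_abs]; exact abs_util_le_one h hv hb
    constructor
    · rw [hAeq]
      apply abs_integral_le_one
      filter_upwards [hnotie] with b hb
      exact abs_utilTie_le_one hb hv (hgmem (v, b))
    · have hle : ∀ᵐ b ∂(s v), util b h v - 2*δ ≤ utilTie tie (g (v, b)) h v := by
        filter_upwards [ae_mem_Iu (hs.2 v), hnotie] with b hb hbne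
        exact key2 hδ0 hδ1 hθ0 hθδ.le hv hb hbne
      have hintu2 : Integrable (fun b => util b h v - 2*δ) (s v) := hintu.sub (integrable_const _)
      have h2 := integral_mono_ae hintu2 hintg hle
      rw [integral_sub hintu (integrable_const _)] at h2
      simp only [integral_const, measure_univ, ENNReal.toReal_one, probReal_univ, smul_eq_mul, one_mul] at h2
      rw [hAeq]
      exact h2
  have hlevel : ∀ᵐ v ∂F, |∫ h, A (v, h) ∂H| ≤ 1 ∧
      (∫ h, B (v, h) ∂H) - 2*δ ≤ ∫ h, A (v, h) ∂H := by
    filter_upwards [ae_mem_Iu hF.2, hae] with v hv hvae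
    have hkey := key v hv hvae
    have hAint : Integrable (fun h => A (v, h)) H := by
      refine Integrable.mono' (integrable_const 1)
        (hAsm.comp_measurable measurable_prodMk_left).aestronglyMeasurable ?_
      filter_upwards [hkey] with h hh
      rw [Real.norm_eq_abs]; exact hh.1
    have hBint : Integrable (fun h => B (v, h)) H := by
      refine Integrable.mono' (integrable_const 1)
        (hBsm.comp_measurable measurable_prodMk_left).aestronglyMeasurable ?_
      refine Filter.Eventually.of_forall fun h => ?_
      rw [Real.norm_eq_abs]; exact hBb v hv h
    constructor
    · exact abs_integral_le_one (hkey.mono fun h hh => hh.1)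
    · have hBint2 : Integrable (fun h => B (v, h) - 2*δ) H := hBint.sub (integrable_const _)
      have h2 := integral_mono_ae hBint2 hAint (hkey.mono fun h hh => hh.2)
      rw [integral_sub hBint (integrable_const _)] at h2
      simp only [integral_const, measure_univ, ENNReal.toReal_one, probReal_univ, smul_eq_mul, one_mul] at h2
      exact h2
  have hAv : StronglyMeasurable fun v => ∫ h, A (v, h) ∂H := hAsm.integral_prod_right'
  have hBv : StronglyMeasurable fun v => ∫ h, B (v, h) ∂H := hBsm.integral_prod_right'
  have hAvint : Integrable (fun v => ∫ h, A (v, h) ∂H) F := by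
    refine Integrable.mono' (integrable_const 1) hAv.aestronglyMeasurable ?_
    filter_upwards [hlevel] with v hv
    rw [Real.norm_eq_abs]; exact hv.1
  have hBvint : Integrable (fun v => ∫ h, B (v, h) ∂H) F := by
    refine Integrable.mono' (integrable_const 1) hBv.aestronglyMeasurable ?_
    filter_upwards [ae_mem_Iu hF.2] with v hv
    rw [Real.norm_eq_abs]
    exact abs_integral_le_one (Filter.Eventually.of_forall fun h => hBb v hv h)
  have hBvint2 : Integrable (fun v => (∫ h, B (v, h) ∂H) - 2*δ) F := hBvint.sub (integrable_const _)
  have hfinal := integral_mono_ae hBvint2 hAvint (hlevel.mono fun v hv => hv.2)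
  rw [integral_sub hBvint (integrable_const _)] at hfinal
  simp only [integral_const, measure_univ, ENNReal.toReal_one, probReal_univ, smul_eq_mul, one_mul] at hfinal
  have e1 : eUtil F s H = ∫ v, ∫ h, B (v, h) ∂H ∂F := rfl
  have e2 : eUtilTie tie F (modK s g) H = ∫ v, ∫ h, A (v, h) ∂H ∂F := rfl
  rw [e1, e2]
  linarith

lemma zero_strategy : IsStrategy (Kernel.deterministic (fun _ : ℝ => (0:ℝ)) measurable_const) := by
  refine ⟨by infer_instance, fun v => ?_⟩
  rw [Kernel.deterministic_apply]
  exact Measure.dirac_apply_of_mem ⟨le_refl 0, zero_le_one⟩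


/-- Lemma: the benchmark does not depend on the tie-breaking rule: for
any tie-breaking rule `π` with `π(v,h) ≤ v − h` and any highest-competing-bid distribution
`H` on `[0,1]`, the optimal expected utility over all bidding strategies is the same for
`u^π` and for the favorable-tie utility `u`. -/
theorem benchmark_tie_breaking_invariant
    (F : Measure ℝ) (hF : IsProbOn F) (H : Measure ℝ) (hH : IsProbOn H)
    (tie : ℝ → ℝ → ℝ) (htiem : Measurable (Function.uncurry tie))
    (htie : ∀ v h : ℝ, tie v h ≤ v - h) :
    (⨆ s' : {k : Kernel ℝ ℝ // IsStrategy k}, eUtilTie tie F s'.1 H)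
      = ⨆ s' : {k : Kernel ℝ ℝ // IsStrategy k}, eUtil F s'.1 H := by
  haveI hne : Nonempty {k : Kernel ℝ ℝ // IsStrategy k} :=
    ⟨⟨Kernel.deterministic (fun _ : ℝ => (0:ℝ)) measurable_const, zero_strategy⟩⟩
  have hbdd1 : BddAbove (Set.range fun s' : {k : Kernel ℝ ℝ // IsStrategy k} =>
      eUtilTie tie F s'.1 H) := by
    refine ⟨1, ?_⟩
    rintro x ⟨s', rfl⟩
    exact eUtilTie_le_one hF hH htie s'.2
  have hbdd2 : BddAbove (Set.range fun s' : {k : Kernel ℝ ℝ // IsStrategy k} =>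
      eUtil F s'.1 H) := by
    refine ⟨1, ?_⟩
    rintro x ⟨s', rfl⟩
    exact eUtil_le_one hF hH s'.2
  apply le_antisymm
  · refine ciSup_le fun s' => ?_
    have h1 := dir1 hF hH htie s'.2
    exact h1.trans (le_ciSup hbdd2
      ⟨modK s'.1 g2fun, modK_isStrategy s'.2 measurable_g2fun g2fun_mem⟩)
  · refine ciSup_le fun s' => ?_
    refine le_of_forall_pos_le_add fun ε hε => ?_
    obtain ⟨s'', hs'', hineq⟩ := dir2 hF hH htiem htie s'.2 hε
    calc eUtil F s'.1 H ≤ eUtilTie tie F s'' H + ε := by linarith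
    _ ≤ _ + ε := add_le_add_left (le_ciSup hbdd1 ⟨s'', hs''⟩) ε

end FPA
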